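/- Let F be a field of characteristic not 2 and let a1, a2, a3 be distinct non-null points with coordinate vectors (xi,yi,zi). If the lines a1a3 and a2a3 are perpendicular, i.e., (x3^2+y3^2-z3^2)(x1x2+y1y2-z1z2) = (x2x3+y2y3-z2z3)(x1x3+y1y3-z1z3), then the quadrances q1=q(a2,a3), q2=q(a1,a3), q3=q(a1,a2) satisfy q3 = q1 + q2 - q1*q2, equivalently 1-q3 = (1-q1)(1-q2). -/

import Mathlib

lemma hyp_pyth_aux {F : Type*} [Field F] (A1 A2 A3 B12 B13 B23 : F)
    (h1 : A1 ≠ 0) (h2 : A2 ≠ 0) (h3 : A3 ≠ 0)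
    (hperp : A3 * B12 = B23 * B13) :
    1 - (1 - B12^2 / (A1 * A2)) =
      (1 - (1 - B23^2 / (A2 * A3))) * (1 - (1 - B13^2 / (A1 * A3))) := by
  field_simp
  linear_combination (A3 * B12 + B23 * B13) * hperp

/-- Hyperbolic Pythagoras: if the lines a1a3 and a2a3 are perpendicular then
    q3 = q1 + q2 - q1 q2. -/
theorem hyperbolic_pythagoras {F : Type*} [Field F] (hchar : (2 : F) ≠ 0)
    (x1 y1 z1 x2 y2 z2 x3 y3 z3 : F)
    (h1 : x1^2 + y1^2 - z1^2 ≠ 0) (h2 : x2^2 + y2^2 - z2^2 ≠ 0) (h3 : x3^2 + y3^2 - z3^2 ≠ 0)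
    (hperp : (x3^2 + y3^2 - z3^2) * (x1*x2 + y1*y2 - z1*z2) =
      (x2*x3 + y2*y3 - z2*z3) * (x1*x3 + y1*y3 - z1*z3))
    (q1 q2 q3 : F)
    (hq1 : q1 = 1 - (x2*x3 + y2*y3 - z2*z3)^2 / ((x2^2 + y2^2 - z2^2) * (x3^2 + y3^2 - z3^2)))
    (hq2 : q2 = 1 - (x1*x3 + y1*y3 - z1*z3)^2 / ((x1^2 + y1^2 - z1^2) * (x3^2 + y3^2 - z3^2)))
    (hq3 : q3 = 1 - (x1*x2 + y1*y2 - z1*z2)^2 / ((x1^2 + y1^2 - z1^2) * (x2^2 + y2^2 - z2^2))) :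
    q3 = q1 + q2 - q1*q2 ∧ 1 - q3 = (1 - q1) * (1 - q2) := by
  have key : 1 - q3 = (1 - q1) * (1 - q2) := by
    rw [hq1, hq2, hq3]
    exact hyp_pyth_aux _ _ _ _ _ _ h1 h2 h3 hperp
  exact ⟨by linear_combination -key, key⟩
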